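/- Let H be a Hopf algebra over a commutative ring R, J a Drinfeld twist for H, and A a left H-module algebra with twisted algebra A^J. Then for all a,b ∈ A one has ab = Σ (J¹·a) ·_J (J²·b); consequently every H^J-stable ideal of A^J is an H-stable ideal of A, nilpotent ideals of A^J are nilpotent ideals of A, and A^J is H^J-semiprime if and only if A is H-semiprime. -/

import Mathlib

open TensorProduct

noncomputable section

/-! ### Integrals in a Hopf algebra -/

/-- `t` is a left integral in `H`: `h * t = ε(h) • t` for all `h ∈ H`. -/
def IsLeftIntegral (R : Type*) {H : Type*} [CommRing R] [Ring H] [HopfAlgebra R H]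
    (t : H) : Prop :=
  ∀ h : H, h * t = Coalgebra.counit (R := R) h • t

/-- `t` is a right integral in `H`: `t * h = ε(h) • t` for all `h ∈ H`. -/
def IsRightIntegral (R : Type*) {H : Type*} [CommRing R] [Ring H] [HopfAlgebra R H]
    (t : H) : Prop :=
  ∀ h : H, t * h = Coalgebra.counit (R := R) h • t

/-! ### Module algebras -/

variable (R H A : Type*)

/-- Given an `H`-action `ρ` on `A` (an `R`-algebra map `H → End_R A`),
`pairAction ρ w` is the operator on `A ⊗ A` given, for `w = Σ x ⊗ y`, by
`a ⊗ b ↦ Σ (x • a) ⊗ (y • b)`. -/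
def pairAction [CommRing R] [Ring H] [HopfAlgebra R H] [Ring A] [Algebra R A]
    (ρ : H →ₐ[R] Module.End R A) :
    H ⊗[R] H →ₗ[R] A ⊗[R] A →ₗ[R] A ⊗[R] A :=
  (TensorProduct.homTensorHomMap (RingHom.id R) A A A A) ∘ₗ
    (TensorProduct.map ρ.toLinearMap ρ.toLinearMap)

/-- A left `H`-module algebra structure on an `R`-algebra `A`: an `H`-module structure
(an `R`-algebra map `ρ : H → End_R A`) such that multiplication and unit of `A` are
morphisms of `H`-modules, i.e. `h • (a b) = Σ_(h) (h₁ • a)(h₂ • b)` and `h • 1 = ε(h) 1`;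
in other words, `A` is an `R`-algebra in the category of left `H`-modules. -/
structure ModuleAlgebra [CommRing R] [Ring H] [HopfAlgebra R H] [Ring A] [Algebra R A] where
  ρ : H →ₐ[R] Module.End R A
  act_mul : ∀ (h : H) (a b : A),
    ρ h (a * b) = LinearMap.mul' R A (pairAction R H A ρ (Coalgebra.comul h) (a ⊗ₜ[R] b))
  act_one : ∀ h : H, ρ h 1 = algebraMap R A (Coalgebra.counit h)

variable {R H A}

/-- The set of `H`-invariant elements `A^H = {a | h • a = ε(h) a}` of a module algebra. -/
def ModuleAlgebra.invariants [CommRing R] [Ring H] [HopfAlgebra R H] [Ring A] [Algebra R A]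
    (ma : ModuleAlgebra R H A) : Set A :=
  {a : A | ∀ h : H, ma.ρ h a = Coalgebra.counit (R := R) h • a}

/-- The set of central `H`-invariant elements `Z(A)^H` of a module algebra. -/
def ModuleAlgebra.centralInvariants [CommRing R] [Ring H] [HopfAlgebra R H] [Ring A]
    [Algebra R A] (ma : ModuleAlgebra R H A) : Set A :=
  {a : A | (∀ b : A, a * b = b * a) ∧ ∀ h : H, ma.ρ h a = Coalgebra.counit (R := R) h • a}

/-- A subset `I ⊆ A` is `H`-stable if it is closed under the `H`-action. -/
def IsHStable [CommRing R] [Ring H] [HopfAlgebra R H] [Ring A] [Algebra R A]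
    (ma : ModuleAlgebra R H A) (I : Set A) : Prop :=
  ∀ h : H, ∀ x ∈ I, ma.ρ h x ∈ I

variable (R H A)

/-- `B` realises the smash product `A # H` of a left `H`-module algebra `A` with `H`:
`B` contains `A` and `H` as subalgebras, the multiplication map `A ⊗_R H → B`,
`a ⊗ h ↦ a·h` is an `R`-module isomorphism (so `B = A ⊗_R H` as `R`-module), and
`(1 # h)(a # 1) = Σ_(h) (h₁ • a) # h₂` holds, which forces the smash product
multiplication `(a # h)(b # g) = Σ_(h) a (h₁ • b) # h₂ g`. -/
structure SmashProductStructure [CommRing R] [Ring H] [HopfAlgebra R H] [Ring A] [Algebra R A]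
    (ma : ModuleAlgebra R H A) (B : Type*) [Ring B] [Algebra R B] where
  ιA : A →ₐ[R] B
  ιH : H →ₐ[R] B
  mul_bij : Function.Bijective
    ((LinearMap.mul' R B) ∘ₗ (TensorProduct.map ιA.toLinearMap ιH.toLinearMap))
  commute_rel : ∀ (h : H) (a : A),
    ιH h * ιA a =
      LinearMap.mul' R B
        ((TensorProduct.map (ιA.toLinearMap ∘ₗ ((LinearMap.flip ma.ρ.toLinearMap) a))
          ιH.toLinearMap) (Coalgebra.comul h))

variable {R H A}

/-! ### Ideals and semiprimeness -/

/-- The ordered product `a₁ ⋯ aₙ` of a nonempty family of ring elements,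
relative to a multiplication `μ`. -/
def nProd {A : Type*} (μ : A → A → A) : A → List A → A
  | a, [] => a
  | a, b :: l => μ a (nProd μ b l)

/-- `I` is a two-sided ideal of `A` (described as a set). -/
def IsIdealSet (A : Type*) [Ring A] (I : Set A) : Prop :=
  (0 : A) ∈ I ∧ (∀ x ∈ I, ∀ y ∈ I, x + y ∈ I) ∧
    ∀ a : A, ∀ x ∈ I, a * x ∈ I ∧ x * a ∈ I

/-- `I` is a two-sided ideal with respect to a (possibly twisted) multiplication `μ`. -/
def IsIdealSetMul {A : Type*} [Ring A] (μ : A → A → A) (I : Set A) : Prop :=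
  (0 : A) ∈ I ∧ (∀ x ∈ I, ∀ y ∈ I, x + y ∈ I) ∧
    ∀ a : A, ∀ x ∈ I, μ a x ∈ I ∧ μ x a ∈ I

/-- `I` is a nilpotent ideal with respect to the multiplication `μ`: some power `Iⁿ`
vanishes, i.e. all products of `n + 1` elements of `I` are zero. -/
def IsNilpotentMulSet {A : Type*} [Zero A] (μ : A → A → A) (I : Set A) : Prop :=
  ∃ n : ℕ, ∀ f : Fin (n + 1) → A, (∀ i, f i ∈ I) →
    nProd μ (f 0) (List.ofFn fun i : Fin n => f i.succ) = 0

/-- A ring is semiprime if it has no nonzero nilpotent two-sided ideal. -/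
def RingIsSemiprime (A : Type*) [Ring A] : Prop :=
  ∀ I : Set A, IsIdealSet A I → IsNilpotentMulSet (· * ·) I → I ⊆ {0}

/-- A module algebra is `H`-semiprime if it has no nonzero nilpotent `H`-stable
two-sided ideal. -/
def IsHSemiprime [CommRing R] [Ring H] [HopfAlgebra R H] [Ring A] [Algebra R A]
    (ma : ModuleAlgebra R H A) : Prop :=
  ∀ I : Set A, IsIdealSet A I → IsHStable ma I → IsNilpotentMulSet (· * ·) I → I ⊆ {0}

/-! ### Drinfeld twists, triangularity, cosemisimplicity, strong semisimplicity -/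

variable (R H : Type*)

/-- `J ∈ H ⊗ H` is a Drinfeld twist for `H`: it is invertible and satisfies
`(J ⊗ 1)(Δ ⊗ 1)(J) = (1 ⊗ J)(1 ⊗ Δ)(J)` and `(ε ⊗ 1)(J) = 1 = (1 ⊗ ε)(J)`. -/
def IsDrinfeldTwist [CommRing R] [Ring H] [HopfAlgebra R H] (J : H ⊗[R] H) : Prop :=
  IsUnit J ∧
  ((Algebra.TensorProduct.includeLeft (R := R) (S := R) (A := H ⊗[R] H) (B := H)) J) *
      (LinearMap.rTensor H (Coalgebra.comul (R := R)) J) =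
    ((Algebra.TensorProduct.assoc R R R H H H).symm
        ((Algebra.TensorProduct.includeRight (R := R) (A := H) (B := H ⊗[R] H)) J)) *
      ((Algebra.TensorProduct.assoc R R R H H H).symm
        (LinearMap.lTensor H (Coalgebra.comul (R := R)) J)) ∧
  TensorProduct.lid R H (LinearMap.rTensor H (Coalgebra.counit (R := R)) J) = 1 ∧
  TensorProduct.rid R H (LinearMap.lTensor H (Coalgebra.counit (R := R)) J) = 1

/-- `r ∈ H ⊗ H` is a triangular structure on `H`: an invertible element with
`(Δ ⊗ 1)(r) = r₁₃ r₂₃`, `(1 ⊗ Δ)(r) = r₁₃ r₁₂`, `Δ^cop = r Δ r⁻¹` and `r⁻¹ = τ(r)`. -/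
def IsTriangularStructure [CommRing R] [Ring H] [HopfAlgebra R H] (r : H ⊗[R] H) : Prop :=
  IsUnit r ∧
  LinearMap.rTensor H (Coalgebra.comul (R := R)) r =
    ((TensorProduct.map (Algebra.TensorProduct.includeLeft
        (R := R) (S := R) (A := H) (B := H)).toLinearMap LinearMap.id) r) *
      ((TensorProduct.map (Algebra.TensorProduct.includeRight
        (R := R) (A := H) (B := H)).toLinearMap LinearMap.id) r) ∧
  (TensorProduct.assoc R H H H).symm (LinearMap.lTensor H (Coalgebra.comul (R := R)) r) =
    ((TensorProduct.map (Algebra.TensorProduct.includeLeft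
        (R := R) (S := R) (A := H) (B := H)).toLinearMap LinearMap.id) r) *
      ((Algebra.TensorProduct.includeLeft (R := R) (S := R) (A := H ⊗[R] H) (B := H)) r) ∧
  (∀ h : H, (TensorProduct.comm R H H) (Coalgebra.comul (R := R) h) * r =
      r * Coalgebra.comul (R := R) h) ∧
  (TensorProduct.comm R H H r) * r = 1 ∧ r * (TensorProduct.comm R H H r) = 1

/-- A Hopf algebra over a field is cosemisimple (its dual coalgebra structure is
cosemisimple) iff it admits a normalized (left or right) integral `λ : H → k` on `H`. -/
def IsCosemisimpleHopf (k H : Type*) [Field k] [Ring H] [HopfAlgebra k H] : Prop :=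
  ∃ lam : H →ₗ[k] k, lam 1 = 1 ∧
    ((∀ h : H, TensorProduct.lid k H (LinearMap.rTensor H lam (Coalgebra.comul (R := k) h)) =
        lam h • (1 : H)) ∨
     (∀ h : H, TensorProduct.rid k H (LinearMap.lTensor H lam (Coalgebra.comul (R := k) h)) =
        lam h • (1 : H)))

universe ua ub

/-- A Hopf algebra `H` is strongly semisimple if for every `H`-semiprime left
`H`-module algebra `A` the smash product `A # H` is semiprime. -/
def StronglySemisimple [CommRing R] [Ring H] [HopfAlgebra R H] : Prop :=
  ∀ (A : Type ua) [Ring A] [Algebra R A] (ma : ModuleAlgebra R H A), IsHSemiprime ma →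
    ∀ (B : Type ub) [Ring B] [Algebra R B],
      SmashProductStructure R H A ma B → RingIsSemiprime B

variable {R H}

variable (R H A : Type*)

/-- The twisted multiplication `a ·_J b := Σ (Q¹ • a)(Q² • b)` on a left `H`-module
algebra `A`, where `Q = J⁻¹` is the inverse of a Drinfeld twist `J`; `A` with this
multiplication is the twisted module algebra `A^J` (a left `H^J`-module algebra with
the same underlying `H`-action). -/
def twistedMul [CommRing R] [Ring H] [HopfAlgebra R H] [Ring A] [Algebra R A]
    (ρ : H →ₐ[R] Module.End R A) (Qinv : H ⊗[R] H) (a b : A) : A :=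
  LinearMap.mul' R A (pairAction R H A ρ Qinv (a ⊗ₜ[R] b))

variable {R H A}

/-! ### Auxiliary lemmas -/

section TwistAux

variable {R H A : Type*} [CommRing R] [Ring H] [HopfAlgebra R H] [Ring A] [Algebra R A]

lemma pairAction_tmul (ρ : H →ₐ[R] Module.End R A) (x y : H) :
    pairAction R H A ρ (x ⊗ₜ[R] y) = TensorProduct.map (ρ x) (ρ y) := by
  simp [pairAction]

lemma pairAction_mul (ρ : H →ₐ[R] Module.End R A) (x y : H ⊗[R] H) :
    pairAction R H A ρ (x * y) = pairAction R H A ρ x ∘ₗ pairAction R H A ρ y := by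
  induction x using TensorProduct.induction_on with
  | zero => simp
  | add x1 x2 h1 h2 => simp [add_mul, h1, h2, LinearMap.add_comp]
  | tmul u v =>
    induction y using TensorProduct.induction_on with
    | zero => simp
    | add y1 y2 h1 h2 => simp [mul_add, h1, h2, LinearMap.comp_add]
    | tmul u' v' =>
      rw [Algebra.TensorProduct.tmul_mul_tmul, pairAction_tmul, pairAction_tmul, pairAction_tmul,
        map_mul, map_mul]
      exact TensorProduct.map_comp _ _ _ _

lemma pairAction_one (ρ : H →ₐ[R] Module.End R A) :
    pairAction R H A ρ 1 = LinearMap.id := by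
  rw [Algebra.TensorProduct.one_def, pairAction_tmul, map_one]
  exact TensorProduct.map_id

lemma rho_mul' (ma : ModuleAlgebra R H A) (h : H) (t : A ⊗[R] A) :
    ma.ρ h (LinearMap.mul' R A t) =
      LinearMap.mul' R A (pairAction R H A ma.ρ (Coalgebra.comul (R := R) h) t) := by
  induction t using TensorProduct.induction_on with
  | zero => simp
  | tmul a b => exact ma.act_mul h a b
  | add t1 t2 h1 h2 => simp [h1, h2]

lemma twistedMul_eq (ρ : H →ₐ[R] Module.End R A) {w c w1 : H ⊗[R] H} (hwc : w * c = w1)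
    (a b : A) :
    twistedMul R H A ρ w1 a b =
      LinearMap.mul' R A (pairAction R H A ρ w (pairAction R H A ρ c (a ⊗ₜ[R] b))) := by
  rw [twistedMul, ← hwc, pairAction_mul]; rfl

lemma twistedMul_one (ρ : H →ₐ[R] Module.End R A) :
    twistedMul R H A ρ 1 = (· * ·) := by
  funext a b
  simp [twistedMul, pairAction_one]

lemma twistedMul_add_right (ρ : H →ₐ[R] Module.End R A) (w : H ⊗[R] H) (a x y : A) :
    twistedMul R H A ρ w a (x + y) = twistedMul R H A ρ w a x + twistedMul R H A ρ w a y := by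
  simp [twistedMul, TensorProduct.tmul_add]

lemma twistedMul_smul_right (ρ : H →ₐ[R] Module.End R A) (w : H ⊗[R] H) (r : R) (a x : A) :
    twistedMul R H A ρ w a (r • x) = r • twistedMul R H A ρ w a x := by
  simp [twistedMul, TensorProduct.tmul_smul]

lemma twistedMul_zero_right (ρ : H →ₐ[R] Module.End R A) (w : H ⊗[R] H) (a : A) :
    twistedMul R H A ρ w a 0 = 0 := by
  simp [twistedMul]

/-- Right-nested powers of an `H`-stable subset `I` with respect to a twisted
multiplication determined by `w`. -/
def idealPow (ρ : H →ₐ[R] Module.End R A) (w : H ⊗[R] H) (I : Set A) : ℕ → Submodule R A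
  | 0 => Submodule.span R I
  | (k + 1) => Submodule.span R
      {z | ∃ a ∈ I, ∃ y ∈ idealPow ρ w I k, z = twistedMul R H A ρ w a y}

lemma idealPow_helper (ma : ModuleAlgebra R H A) (w : H ⊗[R] H) (I : Set A)
    (hI : IsHStable ma I) (k : ℕ) (c : H ⊗[R] H) (a : A) (ha : a ∈ I) (y : A)
    (hy : ∀ v : H, ma.ρ v y ∈ idealPow ma.ρ w I k) :
    LinearMap.mul' R A (pairAction R H A ma.ρ w (pairAction R H A ma.ρ c (a ⊗ₜ[R] y)))
      ∈ idealPow ma.ρ w I (k + 1) := by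
  induction c using TensorProduct.induction_on with
  | zero => simpa using Submodule.zero_mem _
  | add c1 c2 h1 h2 => simpa [map_add] using Submodule.add_mem _ h1 h2
  | tmul u v =>
    rw [pairAction_tmul, TensorProduct.map_tmul]
    exact Submodule.subset_span ⟨ma.ρ u a, hI u a ha, ma.ρ v y, hy v, rfl⟩

lemma idealPow_stable (ma : ModuleAlgebra R H A) (w w' : H ⊗[R] H) (hww' : w * w' = 1)
    (I : Set A) (hI : IsHStable ma I) :
    ∀ k, ∀ h : H, ∀ y ∈ idealPow ma.ρ w I k, ma.ρ h y ∈ idealPow ma.ρ w I k := by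
  intro k
  induction k with
  | zero =>
    intro h y hy
    refine Submodule.span_induction (fun x hx => Submodule.subset_span (hI h x hx))
      (by simp) (fun x y _ _ hx hy => by simpa using Submodule.add_mem _ hx hy)
      (fun r x _ hx => by simpa using Submodule.smul_mem _ r hx) hy
  | succ k ih =>
    intro h y hy
    refine Submodule.span_induction ?_
      (by simp) (fun x y _ _ hx hy => by simpa using Submodule.add_mem _ hx hy)
      (fun r x _ hx => by simpa using Submodule.smul_mem _ r hx) hy
    rintro z ⟨a, ha, y0, hy0, rfl⟩
    have e : pairAction R H A ma.ρ (Coalgebra.comul (R := R) h) ∘ₗ pairAction R H A ma.ρ w =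
        pairAction R H A ma.ρ w ∘ₗ
          pairAction R H A ma.ρ (w' * (Coalgebra.comul (R := R) h * w)) := by
      rw [← pairAction_mul, ← pairAction_mul, ← mul_assoc w w', hww', one_mul]
    have e2 := LinearMap.congr_fun e (a ⊗ₜ[R] y0)
    simp only [LinearMap.comp_apply] at e2
    rw [twistedMul, rho_mul', e2]
    exact idealPow_helper ma w I hI k _ a ha y0 (fun v => ih v y0 hy0)

lemma twistedMul_mem_idealPow (ma : ModuleAlgebra R H A) {w w' c w1 : H ⊗[R] H}
    (hww' : w * w' = 1) (hwc : w * c = w1) (I : Set A) (hI : IsHStable ma I) (k : ℕ)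
    {a : A} (ha : a ∈ I) {y : A} (hy : y ∈ idealPow ma.ρ w I k) :
    twistedMul R H A ma.ρ w1 a y ∈ idealPow ma.ρ w I (k + 1) := by
  rw [twistedMul_eq ma.ρ hwc]
  exact idealPow_helper ma w I hI k c a ha y
    (fun v => idealPow_stable ma w w' hww' I hI k v y hy)

lemma nProd_mem_idealPow (ma : ModuleAlgebra R H A) {w w' c w1 : H ⊗[R] H}
    (hww' : w * w' = 1) (hwc : w * c = w1) (I : Set A) (hI : IsHStable ma I) :
    ∀ k, ∀ f : Fin (k + 1) → A, (∀ i, f i ∈ I) →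
      nProd (twistedMul R H A ma.ρ w1) (f 0) (List.ofFn fun i : Fin k => f i.succ)
        ∈ idealPow ma.ρ w I k := by
  intro k
  induction k with
  | zero => intro f hf; exact Submodule.subset_span (hf 0)
  | succ k ih =>
    intro f hf
    rw [List.ofFn_succ]
    exact twistedMul_mem_idealPow ma hww' hwc I hI k (hf 0)
      (ih (fun i => f i.succ) (fun i => hf i.succ))

lemma idealPow_le_span_nProd (ma : ModuleAlgebra R H A) (w : H ⊗[R] H) (I : Set A) :
    ∀ k, idealPow ma.ρ w I k ≤ Submodule.span R
      {z | ∃ f : Fin (k + 1) → A, (∀ i, f i ∈ I) ∧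
        z = nProd (twistedMul R H A ma.ρ w) (f 0) (List.ofFn fun i : Fin k => f i.succ)} := by
  intro k
  induction k with
  | zero =>
    apply Submodule.span_mono
    intro a ha
    exact ⟨fun _ => a, fun _ => ha, rfl⟩
  | succ k ih =>
    rw [idealPow]
    apply Submodule.span_le.mpr
    rintro z ⟨a, ha, y, hy, rfl⟩
    have hy' := ih hy
    refine Submodule.span_induction (p := fun x _ => twistedMul R H A ma.ρ w a x ∈
        Submodule.span R {z | ∃ f : Fin (k + 2) → A, (∀ i, f i ∈ I) ∧
          z = nProd (twistedMul R H A ma.ρ w) (f 0)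
            (List.ofFn fun i : Fin (k + 1) => f i.succ)}) ?_ ?_ ?_ ?_ hy'
    · rintro x ⟨g, hg, rfl⟩
      refine Submodule.subset_span ⟨Fin.cons a g, fun i => ?_, ?_⟩
      · refine Fin.cases (by simpa using ha) (fun j => by simpa using hg j) i
      · simp only [Fin.cons_zero, Fin.cons_succ, List.ofFn_succ, nProd]
    · show twistedMul R H A ma.ρ w a 0 ∈ _
      rw [twistedMul_zero_right]
      exact Submodule.zero_mem _
    · intro x y _ _ hx hy
      show twistedMul R H A ma.ρ w a (x + y) ∈ _
      rw [twistedMul_add_right]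
      exact Submodule.add_mem _ hx hy
    · intro r x _ hx
      show twistedMul R H A ma.ρ w a (r • x) ∈ _
      rw [twistedMul_smul_right]
      exact Submodule.smul_mem _ r hx

lemma nilpotent_transfer (ma : ModuleAlgebra R H A) {w w' c w1 : H ⊗[R] H}
    (hww' : w * w' = 1) (hwc : w * c = w1) (I : Set A) (hI : IsHStable ma I)
    (hnil : IsNilpotentMulSet (twistedMul R H A ma.ρ w) I) :
    IsNilpotentMulSet (twistedMul R H A ma.ρ w1) I := by
  obtain ⟨n, hn⟩ := hnil
  refine ⟨n, fun f hf => ?_⟩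
  have h1 := nProd_mem_idealPow ma hww' hwc I hI n f hf
  have h2 := idealPow_le_span_nProd ma w I n h1
  have h3 : Submodule.span R {z | ∃ f : Fin (n + 1) → A, (∀ i, f i ∈ I) ∧
      z = nProd (twistedMul R H A ma.ρ w) (f 0) (List.ofFn fun i : Fin n => f i.succ)} ≤ ⊥ := by
    apply Submodule.span_le.mpr
    rintro z ⟨g, hg, rfl⟩
    simpa using hn g hg
  simpa using h3 h2

lemma ideal_transfer (ma : ModuleAlgebra R H A) {w c w1 : H ⊗[R] H} (hwc : w * c = w1)
    (I : Set A) (hI : IsIdealSetMul (twistedMul R H A ma.ρ w) I) (hst : IsHStable ma I) :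
    IsIdealSetMul (twistedMul R H A ma.ρ w1) I := by
  obtain ⟨h0, hadd, habs⟩ := hI
  refine ⟨h0, hadd, fun a x hx => ?_⟩
  have key : ∀ cc : H ⊗[R] H,
      LinearMap.mul' R A (pairAction R H A ma.ρ w (pairAction R H A ma.ρ cc (a ⊗ₜ[R] x))) ∈ I ∧
      LinearMap.mul' R A (pairAction R H A ma.ρ w (pairAction R H A ma.ρ cc (x ⊗ₜ[R] a))) ∈ I := by
    intro cc
    induction cc using TensorProduct.induction_on with
    | zero => constructor <;> simpa using h0
    | add c1 c2 h1 h2 =>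
      constructor
      · simpa [map_add] using hadd _ h1.1 _ h2.1
      · simpa [map_add] using hadd _ h1.2 _ h2.2
    | tmul u v =>
      rw [pairAction_tmul, TensorProduct.map_tmul, TensorProduct.map_tmul]
      exact ⟨(habs (ma.ρ u a) _ (hst v x hx)).1, (habs (ma.ρ v a) _ (hst u x hx)).2⟩
  rw [twistedMul_eq ma.ρ hwc, twistedMul_eq ma.ρ hwc]
  exact key c

end TwistAux


/-- Let `J` be a Drinfeld twist for `H` with inverse `Q`, and let `A`
be a left `H`-module algebra with twisted algebra `A^J`.  Then
`a b = Σ (J¹ • a) ·_J (J² • b)` for all `a b ∈ A`; consequently every `H^J`-stable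
ideal of `A^J` is an `H`-stable ideal of `A`, nilpotent ideals of `A^J` are nilpotent
ideals of `A`, and `A^J` is `H^J`-semiprime if and only if `A` is `H`-semiprime. -/
theorem twisted_module_algebra_semiprime
    {R H A : Type*} [CommRing R] [Ring H] [HopfAlgebra R H] [Ring A] [Algebra R A]
    (ma : ModuleAlgebra R H A)
    (J Qinv : H ⊗[R] H) (hJ : IsDrinfeldTwist R H J)
    (hJQ : J * Qinv = 1) (hQJ : Qinv * J = 1) :
    -- `a b = Σ_J (J¹ • a) ·_J (J² • b)`
    (∀ a b : A, a * b =
      LinearMap.mul' R A (pairAction R H A ma.ρ Qinv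
        (pairAction R H A ma.ρ J (a ⊗ₜ[R] b)))) ∧
    -- every `H^J`-stable ideal of `A^J` is an (`H`-stable) ideal of `A`
    (∀ I : Set A, IsIdealSetMul (twistedMul R H A ma.ρ Qinv) I → IsHStable ma I →
      IsIdealSet A I) ∧
    -- nilpotent (`H^J`-stable) ideals of `A^J` are nilpotent ideals of `A`
    (∀ I : Set A, IsIdealSetMul (twistedMul R H A ma.ρ Qinv) I → IsHStable ma I →
      IsNilpotentMulSet (twistedMul R H A ma.ρ Qinv) I →
      IsNilpotentMulSet (· * ·) I) ∧
    -- `A^J` is `H^J`-semiprime iff `A` is `H`-semiprime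
    ((∀ I : Set A, IsIdealSetMul (twistedMul R H A ma.ρ Qinv) I → IsHStable ma I →
        IsNilpotentMulSet (twistedMul R H A ma.ρ Qinv) I → I ⊆ {0}) ↔
      IsHSemiprime ma) := by
  have hm1 : ∀ a b : A, a * b =
      LinearMap.mul' R A (pairAction R H A ma.ρ Qinv (pairAction R H A ma.ρ J (a ⊗ₜ[R] b))) := by
    intro a b
    have e : pairAction R H A ma.ρ Qinv ∘ₗ pairAction R H A ma.ρ J = LinearMap.id := by
      rw [← pairAction_mul, hQJ, pairAction_one]
    have e2 := LinearMap.congr_fun e (a ⊗ₜ[R] b)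
    simp only [LinearMap.comp_apply, LinearMap.id_apply] at e2
    rw [e2, LinearMap.mul'_apply]
  -- I is an ideal of A iff it is an ideal for `twistedMul 1`
  have hconv : ∀ I : Set A, IsIdealSetMul (twistedMul R H A ma.ρ 1) I ↔ IsIdealSet A I := by
    intro I
    rw [twistedMul_one]
    exact Iff.rfl
  have hnilconv : ∀ I : Set A,
      IsNilpotentMulSet (twistedMul R H A ma.ρ 1) I ↔ IsNilpotentMulSet (· * ·) I := by
    intro I
    rw [twistedMul_one]
  have hideal : ∀ I : Set A, IsIdealSetMul (twistedMul R H A ma.ρ Qinv) I → IsHStable ma I →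
      IsIdealSet A I := by
    intro I hI hst
    exact (hconv I).mp (ideal_transfer ma hQJ I hI hst)
  have hnil : ∀ I : Set A, IsIdealSetMul (twistedMul R H A ma.ρ Qinv) I → IsHStable ma I →
      IsNilpotentMulSet (twistedMul R H A ma.ρ Qinv) I → IsNilpotentMulSet (· * ·) I := by
    intro I _ hst hn
    exact (hnilconv I).mp (nilpotent_transfer ma hQJ hQJ I hst hn)
  refine ⟨hm1, hideal, hnil, ?_, ?_⟩
  · intro hsp I hIdeal hst hn
    refine hsp I ?_ hst ?_
    · exact ideal_transfer ma (c := Qinv) (one_mul Qinv) I ((hconv I).mpr hIdeal) hst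
    · exact nilpotent_transfer ma (w' := 1) (mul_one 1) (one_mul Qinv) I hst
        ((hnilconv I).mpr hn)
  · intro hsp I hIdeal hst hn
    exact hsp I (hideal I hIdeal hst) hst (hnil I hIdeal hst hn)


end
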